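/- Let n ≥ 2 and m ≥ 1. In the oscillator representation of gl(n|m) on A, consider for ℓ₁ ∈ ℕ and s ∈ {1,...,m+1} with s > ℓ₁ + n the element v = η^{s−ℓ₁−n}·(x_1^{ℓ₁}·ϑ_m ϑ_{m−1}⋯ϑ_s), where η = Σ_i x_i y_i + Σ_r θ_r ϑ_r. Then v is annihilated by all raising operators: E_{ij}(v) = 0 for 1 ≤ i < j ≤ n, E_{n+r,n+s'}(v) = 0 for 1 ≤ r < s' ≤ m, and E_{i,n+r}(v) = 0 for all i ∈ {1,...,n}, r ∈ {1,...,m}. -/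

import Mathlib

open TensorProduct MvPolynomial

noncomputable section

variable (n m : ℕ)

/-- bosonic polynomial part -/
abbrev PolyA (n : ℕ) := MvPolynomial (Fin n ⊕ Fin n) ℂ
/-- fermionic exterior part -/
abbrev ExtA (m : ℕ) := ExteriorAlgebra ℂ ((Fin m ⊕ Fin m) → ℂ)
/-- full supersymmetric algebra -/
abbrev SAlg (n m : ℕ) := PolyA n ⊗[ℂ] ExtA m

-- generators
def xv (i : Fin n) : PolyA n := X (Sum.inl i)
def yv (i : Fin n) : PolyA n := X (Sum.inr i)
def θv (r : Fin m) : ExtA m := ExteriorAlgebra.ι ℂ (Pi.single (Sum.inl r) 1)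
def ϑv (r : Fin m) : ExtA m := ExteriorAlgebra.ι ℂ (Pi.single (Sum.inr r) 1)

-- odd superderivations on the exterior part
def dθ (r : Fin m) : Module.End ℂ (ExtA m) :=
  CliffordAlgebra.contractLeft (Q := (0 : QuadraticForm ℂ ((Fin m ⊕ Fin m) → ℂ)))
    (LinearMap.proj (Sum.inl r))
def dϑ (r : Fin m) : Module.End ℂ (ExtA m) :=
  CliffordAlgebra.contractLeft (Q := (0 : QuadraticForm ℂ ((Fin m ⊕ Fin m) → ℂ)))
    (LinearMap.proj (Sum.inr r))

-- operators on the full algebra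
def pdx (i : Fin n) : Module.End ℂ (SAlg n m) :=
  TensorProduct.map ((pderiv (Sum.inl i) : Derivation ℂ (PolyA n) (PolyA n)) : PolyA n →ₗ[ℂ] PolyA n) LinearMap.id
def pdy (i : Fin n) : Module.End ℂ (SAlg n m) :=
  TensorProduct.map ((pderiv (Sum.inr i) : Derivation ℂ (PolyA n) (PolyA n)) : PolyA n →ₗ[ℂ] PolyA n) LinearMap.id
def pdθ (r : Fin m) : Module.End ℂ (SAlg n m) :=
  TensorProduct.map LinearMap.id (dθ m r)
def pdϑ (r : Fin m) : Module.End ℂ (SAlg n m) :=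
  TensorProduct.map LinearMap.id (dϑ m r)

-- multiplication operators
def mx (i : Fin n) : Module.End ℂ (SAlg n m) := LinearMap.mulLeft ℂ (xv n i ⊗ₜ[ℂ] 1)
def mθ (r : Fin m) : Module.End ℂ (SAlg n m) := LinearMap.mulLeft ℂ ((1 : PolyA n) ⊗ₜ[ℂ] θv m r)

def my (i : Fin n) : Module.End ℂ (SAlg n m) := LinearMap.mulLeft ℂ (yv n i ⊗ₜ[ℂ] 1)
def mϑ (r : Fin m) : Module.End ℂ (SAlg n m) := LinearMap.mulLeft ℂ ((1 : PolyA n) ⊗ₜ[ℂ] ϑv m r)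

/-- the element η = Σ_i x_i y_i + Σ_r θ_r ϑ_r of the superalgebra -/
def ηelt : SAlg n m :=
  (∑ i : Fin n, (xv n i * yv n i) ⊗ₜ[ℂ] (1 : ExtA m))
    + ∑ r : Fin m, (1 : PolyA n) ⊗ₜ[ℂ] (θv m r * ϑv m r)

/-- the super-Laplacian Δ = Σ_i ∂_{x_i}∂_{y_i} + Σ_r ∂_{θ_r}∂_{ϑ_r} -/
def ΔS : Module.End ℂ (SAlg n m) :=
  (∑ i : Fin n, pdx n m i ∘ₗ pdy n m i) + ∑ r : Fin m, pdθ n m r ∘ₗ pdϑ n m r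
/-- multiplication by η -/
def ηop : Module.End ℂ (SAlg n m) := LinearMap.mulLeft ℂ (ηelt n m)

/-- E_{ij} = x_i∂_{x_j} − y_j∂_{y_i} -/
def Eij (i j : Fin n) : Module.End ℂ (SAlg n m) := mx n m i ∘ₗ pdx n m j - my n m j ∘ₗ pdy n m i
/-- E_{i,n+r} = x_i∂_{θ_r} − ϑ_r∂_{y_i} -/
def Einr (i : Fin n) (r : Fin m) : Module.End ℂ (SAlg n m) :=
  mx n m i ∘ₗ pdθ n m r - mϑ n m r ∘ₗ pdy n m i
/-- E_{n+r,i} = θ_r∂_{x_i} + y_i∂_{ϑ_r} -/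
def Enri (r : Fin m) (i : Fin n) : Module.End ℂ (SAlg n m) :=
  mθ n m r ∘ₗ pdx n m i + my n m i ∘ₗ pdϑ n m r
/-- E_{n+r,n+s} = θ_r∂_{θ_s} − ϑ_s∂_{ϑ_r} -/
def Enrs (r s : Fin m) : Module.End ℂ (SAlg n m) :=
  mθ n m r ∘ₗ pdθ n m s - mϑ n m s ∘ₗ pdϑ n m r

/-- ϑ⃗_s = ϑ_m ϑ_{m−1}⋯ϑ_s (descending product; equals 1 when s = m+1) -/
def ϑvec (s : ℕ) : ExtA m := ((((List.finRange m).drop (s - 1)).reverse).map (ϑv m)).prod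

-- ===== auxiliary lemmas =====

section Aux
variable {m : ℕ}

lemma ϑv_sq (t : Fin m) : ϑv m t * ϑv m t = 0 := ExteriorAlgebra.ι_sq_zero _

lemma isOrtho0 (a b : (Fin m ⊕ Fin m) → ℂ) :
    (0 : QuadraticForm ℂ ((Fin m ⊕ Fin m) → ℂ)).IsOrtho a b := by
  simp [QuadraticMap.IsOrtho]

lemma ι_anticomm (a b : (Fin m ⊕ Fin m) → ℂ) :
    ExteriorAlgebra.ι ℂ a * ExteriorAlgebra.ι ℂ b
      = -(ExteriorAlgebra.ι ℂ b * ExteriorAlgebra.ι ℂ a) :=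
  CliffordAlgebra.ι_mul_ι_comm_of_isOrtho (isOrtho0 a b)

lemma ϑv_anticomm (a b : Fin m) : ϑv m a * ϑv m b = -(ϑv m b * ϑv m a) :=
  ι_anticomm _ _

lemma ϑ_mul_prod_eq_zero {l : List (Fin m)} {w : Fin m} (hw : w ∈ l) :
    ϑv m w * (l.map (ϑv m)).prod = 0 := by
  induction l with
  | nil => simp at hw
  | cons a t ih =>
    simp only [List.map_cons, List.prod_cons, ← mul_assoc]
    rcases List.mem_cons.mp hw with h | h
    · subst h; rw [ϑv_sq, zero_mul]
    · rw [show ϑv m w * ϑv m a = -(ϑv m a * ϑv m w) from ι_anticomm _ _,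
        neg_mul, mul_assoc, ih h, mul_zero, neg_zero]

lemma dθ_ϑ_cons (r a : Fin m) (x : ExtA m) :
    dθ m r (ϑv m a * x) = - (ϑv m a * dθ m r x) := by
  rw [dθ, ϑv, CliffordAlgebra.contractLeft_ι_mul, ← dθ, ← ϑv]
  simp

lemma dθ_ϑprod (r : Fin m) (l : List (Fin m)) :
    dθ m r ((l.map (ϑv m)).prod) = 0 := by
  induction l with
  | nil =>
    show dθ m r 1 = 0
    exact CliffordAlgebra.contractLeft_one _ _
  | cons a t ih =>
    simp only [List.map_cons, List.prod_cons]
    rw [dθ_ϑ_cons, ih, mul_zero, neg_zero]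

lemma dϑ_ϑ_cons (r a : Fin m) (x : ExtA m) :
    dϑ m r (ϑv m a * x) = (if a = r then (1:ℂ) else 0) • x - ϑv m a * dϑ m r x := by
  rw [dϑ, ϑv, CliffordAlgebra.contractLeft_ι_mul, ← dϑ, ← ϑv]
  have : (LinearMap.proj (Sum.inr r) : ((Fin m ⊕ Fin m) → ℂ) →ₗ[ℂ] ℂ)
      (Pi.single (Sum.inr a) 1) = (if a = r then (1:ℂ) else 0) := by
    rw [LinearMap.proj_apply]
    by_cases h : a = r
    · subst h; simp
    · rw [Pi.single_eq_of_ne (by simpa using (Ne.symm h)), if_neg h]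
  rw [this]

lemma ϑ_mul_dϑ_prod {r s' : Fin m} (hne : s' ≠ r) {l : List (Fin m)} (hs' : s' ∈ l) :
    ϑv m s' * dϑ m r ((l.map (ϑv m)).prod) = 0 := by
  induction l with
  | nil => simp at hs'
  | cons a t ih =>
    simp only [List.map_cons, List.prod_cons]
    rw [dϑ_ϑ_cons, mul_sub]
    have hterm2 : ϑv m s' * (ϑv m a * dϑ m r ((t.map (ϑv m)).prod)) = 0 := by
      rw [← mul_assoc]
      by_cases hsa : s' = a
      · rw [hsa, ϑv_sq, zero_mul]
      · have hst : s' ∈ t := by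
          rcases List.mem_cons.mp hs' with h | h
          · exact absurd h hsa
          · exact h
        rw [ϑv_anticomm, neg_mul, mul_assoc, ih hst, mul_zero, neg_zero]
    rw [hterm2, sub_zero, mul_smul_comm]
    by_cases har : a = r
    · have hst : s' ∈ t := by
        rcases List.mem_cons.mp hs' with h | h
        · exact absurd (h.trans har) hne
        · exact h
      rw [ϑ_mul_prod_eq_zero hst, smul_zero]
    · rw [if_neg har, zero_smul]

end Aux

section Aux2
variable {m : ℕ}

lemma dθ_θϑ (r a : Fin m) (e : ExtA m) :
    dθ m r (θv m a * ϑv m a * e)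
      = (if a = r then (1:ℂ) else 0) • (ϑv m a * e) + θv m a * ϑv m a * dθ m r e := by
  have h1 : (LinearMap.proj (Sum.inl r) : ((Fin m ⊕ Fin m) → ℂ) →ₗ[ℂ] ℂ)
      (Pi.single (Sum.inl a) 1) = (if a = r then (1:ℂ) else 0) := by
    rw [LinearMap.proj_apply]
    by_cases h : a = r
    · subst h; simp
    · rw [Pi.single_eq_of_ne (by simpa using (Ne.symm h)), if_neg h]
  have h2 : (LinearMap.proj (Sum.inl r) : ((Fin m ⊕ Fin m) → ℂ) →ₗ[ℂ] ℂ)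
      (Pi.single (Sum.inr a) 1) = 0 := by
    rw [LinearMap.proj_apply, Pi.single_eq_of_ne (by simp)]
  rw [mul_assoc, dθ, θv, CliffordAlgebra.contractLeft_ι_mul, ϑv,
    CliffordAlgebra.contractLeft_ι_mul, h1, h2, zero_smul, ← ϑv, ← θv, ← dθ]
  simp only [zero_sub, mul_neg, sub_neg_eq_add, mul_assoc]

lemma dϑ_θϑ (r a : Fin m) (e : ExtA m) :
    dϑ m r (θv m a * ϑv m a * e)
      = -((if a = r then (1:ℂ) else 0) • (θv m a * e)) + θv m a * ϑv m a * dϑ m r e := by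
  have h1 : (LinearMap.proj (Sum.inr r) : ((Fin m ⊕ Fin m) → ℂ) →ₗ[ℂ] ℂ)
      (Pi.single (Sum.inl a) 1) = 0 := by
    rw [LinearMap.proj_apply, Pi.single_eq_of_ne (by simp)]
  have h2 : (LinearMap.proj (Sum.inr r) : ((Fin m ⊕ Fin m) → ℂ) →ₗ[ℂ] ℂ)
      (Pi.single (Sum.inr a) 1) = (if a = r then (1:ℂ) else 0) := by
    rw [LinearMap.proj_apply]
    by_cases h : a = r
    · subst h; simp
    · rw [Pi.single_eq_of_ne (by simpa using (Ne.symm h)), if_neg h]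
  rw [mul_assoc, dϑ, θv, CliffordAlgebra.contractLeft_ι_mul, ϑv,
    CliffordAlgebra.contractLeft_ι_mul, h1, h2, zero_smul, zero_sub, ← ϑv, ← θv, ← dϑ]
  simp only [mul_sub, mul_smul_comm, mul_assoc]
  abel

lemma dϑ_prod_notmem {r : Fin m} {l : List (Fin m)} (hr : r ∉ l) :
    dϑ m r ((l.map (ϑv m)).prod) = 0 := by
  induction l with
  | nil =>
    show dϑ m r 1 = 0
    exact CliffordAlgebra.contractLeft_one _ _
  | cons a t ih =>
    simp only [List.map_cons, List.prod_cons]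
    rw [dϑ_ϑ_cons, if_neg (by rintro rfl; exact hr List.mem_cons_self), zero_smul,
      ih (fun h => hr (List.mem_cons_of_mem a h)), mul_zero, zero_sub, neg_zero]

lemma ιι_central (a b : (Fin m ⊕ Fin m) → ℂ) (x : ExtA m) :
    (ExteriorAlgebra.ι ℂ a * ExteriorAlgebra.ι ℂ b) * x
      = x * (ExteriorAlgebra.ι ℂ a * ExteriorAlgebra.ι ℂ b) := by
  induction x using CliffordAlgebra.induction with
  | algebraMap r => exact (Algebra.commutes r _).symm
  | ι v =>
    rw [mul_assoc, ι_anticomm b v, mul_neg, ← mul_assoc, ι_anticomm a v, neg_mul, neg_neg,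
      mul_assoc]
  | mul x y hx hy => rw [← mul_assoc, hx, mul_assoc, hy, mul_assoc]
  | add x y hx hy => rw [mul_add, add_mul, hx, hy]

end Aux2

section SAlgAux
variable {n m : ℕ}

lemma left_central (q : PolyA n) (u : SAlg n m) :
    (q ⊗ₜ[ℂ] (1:ExtA m)) * u = u * (q ⊗ₜ[ℂ] (1:ExtA m)) := by
  induction u using TensorProduct.induction_on with
  | zero => simp
  | tmul p e => simp [Algebra.TensorProduct.tmul_mul_tmul, mul_comm q p]
  | add u v hu hv => rw [mul_add, add_mul, hu, hv]

lemma right_central {b : ExtA m} (hb : ∀ e, b * e = e * b) (u : SAlg n m) :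
    ((1:PolyA n) ⊗ₜ[ℂ] b) * u = u * ((1:PolyA n) ⊗ₜ[ℂ] b) := by
  induction u using TensorProduct.induction_on with
  | zero => simp
  | tmul p e => simp [Algebra.TensorProduct.tmul_mul_tmul, hb e]
  | add u v hu hv => rw [mul_add, add_mul, hu, hv]

lemma η_central (u : SAlg n m) : ηelt n m * u = u * ηelt n m := by
  rw [ηelt, add_mul, mul_add, Finset.sum_mul, Finset.mul_sum, Finset.sum_mul, Finset.mul_sum]
  congr 1
  · exact Finset.sum_congr rfl fun i _ => left_central _ u
  · exact Finset.sum_congr rfl fun r _ => right_central (fun e => ιι_central _ _ e) u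

lemma pdx_tmul (i : Fin n) (p : PolyA n) (e : ExtA m) :
    pdx n m i (p ⊗ₜ[ℂ] e) = (pderiv (Sum.inl i) p) ⊗ₜ[ℂ] e := rfl

lemma pdy_tmul (i : Fin n) (p : PolyA n) (e : ExtA m) :
    pdy n m i (p ⊗ₜ[ℂ] e) = (pderiv (Sum.inr i) p) ⊗ₜ[ℂ] e := rfl

lemma pdθ_tmul (r : Fin m) (p : PolyA n) (e : ExtA m) :
    pdθ n m r (p ⊗ₜ[ℂ] e) = p ⊗ₜ[ℂ] dθ m r e := rfl

lemma pdϑ_tmul (r : Fin m) (p : PolyA n) (e : ExtA m) :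
    pdϑ n m r (p ⊗ₜ[ℂ] e) = p ⊗ₜ[ℂ] dϑ m r e := rfl

end SAlgAux

section Leibniz
variable {n m : ℕ}

lemma pdx_lmul (i : Fin n) (q : PolyA n) (v : SAlg n m) :
    pdx n m i ((q ⊗ₜ[ℂ] (1:ExtA m)) * v)
      = ((pderiv (Sum.inl i) q) ⊗ₜ[ℂ] (1:ExtA m)) * v + (q ⊗ₜ[ℂ] (1:ExtA m)) * pdx n m i v := by
  induction v using TensorProduct.induction_on with
  | zero => simp
  | tmul p e =>
    simp only [Algebra.TensorProduct.tmul_mul_tmul, one_mul, pdx_tmul, pderiv_mul, add_tmul]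
  | add u v hu hv =>
    rw [mul_add, map_add, hu, hv, map_add, mul_add, mul_add]
    abel

lemma pdy_lmul (i : Fin n) (q : PolyA n) (v : SAlg n m) :
    pdy n m i ((q ⊗ₜ[ℂ] (1:ExtA m)) * v)
      = ((pderiv (Sum.inr i) q) ⊗ₜ[ℂ] (1:ExtA m)) * v + (q ⊗ₜ[ℂ] (1:ExtA m)) * pdy n m i v := by
  induction v using TensorProduct.induction_on with
  | zero => simp
  | tmul p e =>
    simp only [Algebra.TensorProduct.tmul_mul_tmul, one_mul, pdy_tmul, pderiv_mul, add_tmul]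
  | add u v hu hv =>
    rw [mul_add, map_add, hu, hv, map_add, mul_add, mul_add]
    abel

lemma pdx_rmul (i : Fin n) (g : ExtA m) (v : SAlg n m) :
    pdx n m i (((1:PolyA n) ⊗ₜ[ℂ] g) * v) = ((1:PolyA n) ⊗ₜ[ℂ] g) * pdx n m i v := by
  induction v using TensorProduct.induction_on with
  | zero => simp
  | tmul p e =>
    simp only [Algebra.TensorProduct.tmul_mul_tmul, one_mul, pdx_tmul]
  | add u v hu hv => rw [mul_add, map_add, hu, hv, map_add, mul_add]

lemma pdy_rmul (i : Fin n) (g : ExtA m) (v : SAlg n m) :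
    pdy n m i (((1:PolyA n) ⊗ₜ[ℂ] g) * v) = ((1:PolyA n) ⊗ₜ[ℂ] g) * pdy n m i v := by
  induction v using TensorProduct.induction_on with
  | zero => simp
  | tmul p e =>
    simp only [Algebra.TensorProduct.tmul_mul_tmul, one_mul, pdy_tmul]
  | add u v hu hv => rw [mul_add, map_add, hu, hv, map_add, mul_add]

lemma pdθ_lmul (r : Fin m) (q : PolyA n) (v : SAlg n m) :
    pdθ n m r ((q ⊗ₜ[ℂ] (1:ExtA m)) * v) = (q ⊗ₜ[ℂ] (1:ExtA m)) * pdθ n m r v := by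
  induction v using TensorProduct.induction_on with
  | zero => simp
  | tmul p e =>
    simp only [Algebra.TensorProduct.tmul_mul_tmul, one_mul, pdθ_tmul]
  | add u v hu hv => rw [mul_add, map_add, hu, hv, map_add, mul_add]

lemma pdϑ_lmul (r : Fin m) (q : PolyA n) (v : SAlg n m) :
    pdϑ n m r ((q ⊗ₜ[ℂ] (1:ExtA m)) * v) = (q ⊗ₜ[ℂ] (1:ExtA m)) * pdϑ n m r v := by
  induction v using TensorProduct.induction_on with
  | zero => simp
  | tmul p e =>
    simp only [Algebra.TensorProduct.tmul_mul_tmul, one_mul, pdϑ_tmul]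
  | add u v hu hv => rw [mul_add, map_add, hu, hv, map_add, mul_add]

lemma pdθ_θϑmul (r a : Fin m) (v : SAlg n m) :
    pdθ n m r (((1:PolyA n) ⊗ₜ[ℂ] (θv m a * ϑv m a)) * v)
      = (if a = r then (1:ℂ) else 0) • (((1:PolyA n) ⊗ₜ[ℂ] ϑv m a) * v)
        + ((1:PolyA n) ⊗ₜ[ℂ] (θv m a * ϑv m a)) * pdθ n m r v := by
  induction v using TensorProduct.induction_on with
  | zero => simp
  | tmul p e =>
    simp only [Algebra.TensorProduct.tmul_mul_tmul, one_mul, pdθ_tmul, dθ_θϑ,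
      tmul_add, tmul_smul]
  | add u v hu hv =>
    simp only [mul_add, map_add, hu, hv, smul_add]
    abel

lemma pdϑ_θϑmul (r a : Fin m) (v : SAlg n m) :
    pdϑ n m r (((1:PolyA n) ⊗ₜ[ℂ] (θv m a * ϑv m a)) * v)
      = -((if a = r then (1:ℂ) else 0) • (((1:PolyA n) ⊗ₜ[ℂ] θv m a) * v))
        + ((1:PolyA n) ⊗ₜ[ℂ] (θv m a * ϑv m a)) * pdϑ n m r v := by
  induction v using TensorProduct.induction_on with
  | zero => simp
  | tmul p e =>
    simp only [Algebra.TensorProduct.tmul_mul_tmul, one_mul, pdϑ_tmul, dϑ_θϑ,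
      tmul_add, tmul_smul, tmul_neg]
  | add u v hu hv =>
    simp only [mul_add, map_add, hu, hv, smul_add, neg_add]
    abel

end Leibniz

section EtaLeibniz
variable {n m : ℕ}

lemma pderiv_xy_inl (i k : Fin n) :
    pderiv (R := ℂ) (Sum.inl i) (xv n k * yv n k) = if k = i then yv n k else 0 := by
  rw [xv, yv, pderiv_mul, pderiv_X_of_ne (i := Sum.inl i) (j := Sum.inr k) (by simp), mul_zero, add_zero]
  by_cases hk : k = i
  · subst hk; rw [pderiv_X_self, one_mul, if_pos rfl]
  · rw [pderiv_X_of_ne (by simpa using hk), zero_mul, if_neg hk]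

lemma pderiv_xy_inr (i k : Fin n) :
    pderiv (R := ℂ) (Sum.inr i) (xv n k * yv n k) = if k = i then xv n k else 0 := by
  rw [xv, yv, pderiv_mul, pderiv_X_of_ne (i := Sum.inr i) (j := Sum.inl k) (by simp), zero_mul, zero_add]
  by_cases hk : k = i
  · subst hk; rw [pderiv_X_self, mul_one, if_pos rfl]
  · rw [pderiv_X_of_ne (by simpa using hk), mul_zero, if_neg hk]

lemma pdx_η (i : Fin n) (v : SAlg n m) :
    pdx n m i (ηelt n m * v) = (yv n i ⊗ₜ[ℂ] (1:ExtA m)) * v + ηelt n m * pdx n m i v := by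
  rw [ηelt]
  simp only [add_mul, Finset.sum_mul, map_add, map_sum, pdx_lmul, pdx_rmul]
  rw [Finset.sum_add_distrib]
  have hsum : ∑ k, ((pderiv (Sum.inl i) (xv n k * yv n k)) ⊗ₜ[ℂ] (1:ExtA m)) * v
      = (yv n i ⊗ₜ[ℂ] (1:ExtA m)) * v := by
    rw [Finset.sum_eq_single i]
    · rw [pderiv_xy_inl, if_pos rfl]
    · intro k _ hk
      rw [pderiv_xy_inl, if_neg hk, TensorProduct.zero_tmul, zero_mul]
    · intro h; exact absurd (Finset.mem_univ i) h
  rw [hsum]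
  abel

lemma pdy_η (i : Fin n) (v : SAlg n m) :
    pdy n m i (ηelt n m * v) = (xv n i ⊗ₜ[ℂ] (1:ExtA m)) * v + ηelt n m * pdy n m i v := by
  rw [ηelt]
  simp only [add_mul, Finset.sum_mul, map_add, map_sum, pdy_lmul, pdy_rmul]
  rw [Finset.sum_add_distrib]
  have hsum : ∑ k, ((pderiv (Sum.inr i) (xv n k * yv n k)) ⊗ₜ[ℂ] (1:ExtA m)) * v
      = (xv n i ⊗ₜ[ℂ] (1:ExtA m)) * v := by
    rw [Finset.sum_eq_single i]
    · rw [pderiv_xy_inr, if_pos rfl]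
    · intro k _ hk
      rw [pderiv_xy_inr, if_neg hk, TensorProduct.zero_tmul, zero_mul]
    · intro h; exact absurd (Finset.mem_univ i) h
  rw [hsum]
  abel

lemma pdθ_η (r : Fin m) (v : SAlg n m) :
    pdθ n m r (ηelt n m * v)
      = ((1:PolyA n) ⊗ₜ[ℂ] ϑv m r) * v + ηelt n m * pdθ n m r v := by
  rw [ηelt]
  simp only [add_mul, Finset.sum_mul, map_add, map_sum, pdθ_lmul, pdθ_θϑmul]
  rw [Finset.sum_add_distrib]
  have hsum : ∑ a, (if a = r then (1:ℂ) else 0) • (((1:PolyA n) ⊗ₜ[ℂ] ϑv m a) * v)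
      = ((1:PolyA n) ⊗ₜ[ℂ] ϑv m r) * v := by
    rw [Finset.sum_eq_single r]
    · rw [if_pos rfl, one_smul]
    · intro a _ ha; rw [if_neg ha, zero_smul]
    · intro h; exact absurd (Finset.mem_univ r) h
  rw [hsum]
  abel

lemma pdϑ_η (r : Fin m) (v : SAlg n m) :
    pdϑ n m r (ηelt n m * v)
      = ηelt n m * pdϑ n m r v - ((1:PolyA n) ⊗ₜ[ℂ] θv m r) * v := by
  rw [ηelt]
  simp only [add_mul, Finset.sum_mul, map_add, map_sum, pdϑ_lmul, pdϑ_θϑmul]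
  rw [Finset.sum_add_distrib]
  have hsum : ∑ a, -((if a = r then (1:ℂ) else 0) • (((1:PolyA n) ⊗ₜ[ℂ] θv m a) * v))
      = -(((1:PolyA n) ⊗ₜ[ℂ] θv m r) * v) := by
    rw [Finset.sum_eq_single r]
    · rw [if_pos rfl, one_smul]
    · intro a _ ha; rw [if_neg ha, zero_smul, neg_zero]
    · intro h; exact absurd (Finset.mem_univ r) h
  rw [hsum]
  abel

end EtaLeibniz

section ECommute
variable {n m : ℕ}

lemma left_swap_η (q : PolyA n) (w : SAlg n m) :
    (q ⊗ₜ[ℂ] (1:ExtA m)) * (ηelt n m * w) = ηelt n m * ((q ⊗ₜ[ℂ] (1:ExtA m)) * w) := by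
  rw [← mul_assoc, left_central q (ηelt n m), mul_assoc]

lemma right_swap_η (b : ExtA m) (w : SAlg n m) :
    ((1:PolyA n) ⊗ₜ[ℂ] b) * (ηelt n m * w) = ηelt n m * (((1:PolyA n) ⊗ₜ[ℂ] b) * w) := by
  rw [← mul_assoc, ← η_central ((1:PolyA n) ⊗ₜ[ℂ] b), mul_assoc]

lemma Eij_η (i j : Fin n) (u : SAlg n m) :
    Eij n m i j (ηelt n m * u) = ηelt n m * Eij n m i j u := by
  simp only [Eij, LinearMap.sub_apply, LinearMap.comp_apply, mx, my, LinearMap.mulLeft_apply,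
    pdx_η, pdy_η, mul_add, left_swap_η]
  have hAB : (xv n i ⊗ₜ[ℂ] (1:ExtA m)) * ((yv n j ⊗ₜ[ℂ] (1:ExtA m)) * u)
      = (yv n j ⊗ₜ[ℂ] (1:ExtA m)) * ((xv n i ⊗ₜ[ℂ] (1:ExtA m)) * u) := by
    rw [← mul_assoc, ← mul_assoc, Algebra.TensorProduct.tmul_mul_tmul,
      Algebra.TensorProduct.tmul_mul_tmul, mul_comm (xv n i) (yv n j)]
  rw [hAB, mul_sub]
  abel

lemma Einr_η (i : Fin n) (r : Fin m) (u : SAlg n m) :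
    Einr n m i r (ηelt n m * u) = ηelt n m * Einr n m i r u := by
  simp only [Einr, LinearMap.sub_apply, LinearMap.comp_apply, mx, mϑ, LinearMap.mulLeft_apply,
    pdθ_η, pdy_η, mul_add, left_swap_η, right_swap_η]
  have hAB : (xv n i ⊗ₜ[ℂ] (1:ExtA m)) * (((1:PolyA n) ⊗ₜ[ℂ] ϑv m r) * u)
      = ((1:PolyA n) ⊗ₜ[ℂ] ϑv m r) * ((xv n i ⊗ₜ[ℂ] (1:ExtA m)) * u) := by
    rw [← mul_assoc, ← mul_assoc, Algebra.TensorProduct.tmul_mul_tmul,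
      Algebra.TensorProduct.tmul_mul_tmul, one_mul, mul_one, one_mul, mul_one]
  rw [hAB, mul_sub]
  abel

lemma Enrs_η (r s' : Fin m) (u : SAlg n m) :
    Enrs n m r s' (ηelt n m * u) = ηelt n m * Enrs n m r s' u := by
  have hzero : θv m r * ϑv m s' + ϑv m s' * θv m r = 0 :=
    CliffordAlgebra.ι_mul_ι_add_swap_of_isOrtho (isOrtho0 _ _)
  have h0 : ((1:PolyA n) ⊗ₜ[ℂ] θv m r) * (((1:PolyA n) ⊗ₜ[ℂ] ϑv m s') * u)
      + ((1:PolyA n) ⊗ₜ[ℂ] ϑv m s') * (((1:PolyA n) ⊗ₜ[ℂ] θv m r) * u) = 0 := by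
    rw [← mul_assoc, ← mul_assoc, Algebra.TensorProduct.tmul_mul_tmul,
      Algebra.TensorProduct.tmul_mul_tmul, one_mul, ← add_mul, ← TensorProduct.tmul_add,
      hzero, TensorProduct.tmul_zero, zero_mul]
  simp only [Enrs, LinearMap.sub_apply, LinearMap.comp_apply, mθ, mϑ,
    LinearMap.mulLeft_apply]
  rw [pdθ_η, pdϑ_η, mul_add, mul_sub, right_swap_η (θv m r), right_swap_η (ϑv m s'), mul_sub]
  have hre : (((1:PolyA n) ⊗ₜ[ℂ] θv m r) * (((1:PolyA n) ⊗ₜ[ℂ] ϑv m s') * u)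
        + ηelt n m * (((1:PolyA n) ⊗ₜ[ℂ] θv m r) * pdθ n m s' u))
      - (ηelt n m * (((1:PolyA n) ⊗ₜ[ℂ] ϑv m s') * pdϑ n m r u)
        - ((1:PolyA n) ⊗ₜ[ℂ] ϑv m s') * (((1:PolyA n) ⊗ₜ[ℂ] θv m r) * u))
      = (((1:PolyA n) ⊗ₜ[ℂ] θv m r) * (((1:PolyA n) ⊗ₜ[ℂ] ϑv m s') * u)
          + ((1:PolyA n) ⊗ₜ[ℂ] ϑv m s') * (((1:PolyA n) ⊗ₜ[ℂ] θv m r) * u))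
        + (ηelt n m * (((1:PolyA n) ⊗ₜ[ℂ] θv m r) * pdθ n m s' u)
          - ηelt n m * (((1:PolyA n) ⊗ₜ[ℂ] ϑv m s') * pdϑ n m r u)) := by abel
  rw [hre, h0, zero_add]

lemma annih_pow {E : Module.End ℂ (SAlg n m)}
    (hc : ∀ u, E (ηelt n m * u) = ηelt n m * E u) {w : SAlg n m} (hw : E w = 0) (k : ℕ) :
    E ((ηop n m ^ k) w) = 0 := by
  induction k with
  | zero => simpa using hw
  | succ k ih =>
    rw [pow_succ', Module.End.mul_apply]
    have : (ηop n m) ((ηop n m ^ k) w) = ηelt n m * ((ηop n m ^ k) w) := rfl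
    rw [this, hc, ih, mul_zero]

end ECommute

section Membership

lemma mem_drop_finRange {m k : ℕ} {t : Fin m} :
    t ∈ (List.finRange m).drop k ↔ k ≤ t.val := by
  constructor
  · intro h
    obtain ⟨i, hi, he⟩ := List.mem_iff_getElem.mp h
    rw [List.getElem_drop] at he
    have := congrArg Fin.val he
    simp only [List.getElem_finRange, Fin.coe_cast] at this
    omega
  · intro h
    refine List.mem_iff_getElem.mpr ⟨t.val - k, ?_, ?_⟩
    · rw [List.length_drop, List.length_finRange]
      omega
    · rw [List.getElem_drop, List.getElem_finRange]
      ext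
      simp
      omega

end Membership

theorem singular_vector_annihilated (hn : 2 ≤ n) (hm : 1 ≤ m)
    (ℓ₁ s : ℕ) (hs : s ≤ m + 1) (hsn : ℓ₁ + n < s) :
    let v : SAlg n m :=
      (ηop n m ^ (s - ℓ₁ - n)) ((xv n ⟨0, by omega⟩ ^ ℓ₁) ⊗ₜ[ℂ] ϑvec m s)
    (∀ i j : Fin n, i < j → Eij n m i j v = 0)
    ∧ (∀ r s' : Fin m, r < s' → Enrs n m r s' v = 0)
    ∧ (∀ (i : Fin n) (r : Fin m), Einr n m i r v = 0) := by
  intro v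
  have hz : (0:ℕ) < n := by omega
  have hxpow_inl : ∀ j : Fin n, (⟨0, hz⟩ : Fin n) ≠ j →
      pderiv (R := ℂ) (Sum.inl j) (xv n ⟨0, hz⟩ ^ ℓ₁) = 0 := by
    intro j hj
    rw [xv, pderiv_pow, pderiv_X_of_ne (by simpa using hj), mul_zero]
  have hxpow_inr : ∀ i : Fin n,
      pderiv (R := ℂ) (Sum.inr i) (xv n ⟨0, hz⟩ ^ ℓ₁) = 0 := by
    intro i
    rw [xv, pderiv_pow, pderiv_X_of_ne (by simp), mul_zero]
  refine ⟨fun i j hij => ?_, fun r s' hrs => ?_, fun i r => ?_⟩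
  · refine annih_pow (fun u => Eij_η i j u) ?_ _
    have hj : (⟨0, hz⟩ : Fin n) ≠ j := by
      intro h
      rw [← h] at hij
      simp [Fin.lt_def] at hij
    rw [Eij, LinearMap.sub_apply, LinearMap.comp_apply, LinearMap.comp_apply,
      pdx_tmul, pdy_tmul, hxpow_inl j hj, hxpow_inr i]
    simp only [TensorProduct.zero_tmul, map_zero, sub_zero]
  · refine annih_pow (fun u => Enrs_η r s' u) ?_ _
    rw [Enrs, LinearMap.sub_apply, LinearMap.comp_apply, LinearMap.comp_apply,
      pdθ_tmul, pdϑ_tmul, ϑvec, dθ_ϑprod, TensorProduct.tmul_zero, map_zero, zero_sub,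
      neg_eq_zero, mϑ, LinearMap.mulLeft_apply, Algebra.TensorProduct.tmul_mul_tmul, one_mul]
    by_cases hcase : s - 1 ≤ s'.val
    · have hmem : s' ∈ ((List.finRange m).drop (s-1)).reverse :=
        List.mem_reverse.mpr (mem_drop_finRange.mpr hcase)
      rw [ϑ_mul_dϑ_prod (ne_of_gt hrs) hmem, TensorProduct.tmul_zero]
    · have hrval : r.val < s'.val := hrs
      have hr : r ∉ ((List.finRange m).drop (s-1)).reverse := by
        rw [List.mem_reverse, mem_drop_finRange]
        omega
      rw [dϑ_prod_notmem hr, mul_zero, TensorProduct.tmul_zero]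
  · refine annih_pow (fun u => Einr_η i r u) ?_ _
    rw [Einr, LinearMap.sub_apply, LinearMap.comp_apply, LinearMap.comp_apply,
      pdθ_tmul, pdy_tmul, ϑvec, dθ_ϑprod, hxpow_inr i]
    simp only [TensorProduct.tmul_zero, TensorProduct.zero_tmul, map_zero, sub_zero]
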